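/- Let m : (0,∞) → ℝ be a function such that m(√(c₁² + c₂²)) ≤ m(c₁) + m(c₂) for all c₁, c₂ > 0, and such that m(√s · c) ≤ s·m(c) for all s ≥ 1 and c > 0, with strict inequality m(√s · c₁) < s·m(c₁) for some fixed c₁ > 0 and all s > 1. Then for all c₂ > 0, m(√(c₁² + c₂²)) < m(c₁) + m(c₂). -/

import Mathlib

/-- Strict sub-additivity: if `m(√(c₁²+c₂²)) ≤ m(c₁)+m(c₂)`, `m(√s·c) ≤ s·m(c)` for
`s ≥ 1`, and `m(√s·c₁) < s·m(c₁)` for all `s > 1` at some fixed `c₁ > 0`, then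
`m(√(c₁²+c₂²)) < m(c₁)+m(c₂)` for all `c₂ > 0`. -/
theorem stmt_12 (m : ℝ → ℝ)
    (hsub : ∀ c₁ c₂ : ℝ, 0 < c₁ → 0 < c₂ →
      m (Real.sqrt (c₁ ^ 2 + c₂ ^ 2)) ≤ m c₁ + m c₂)
    (hscale : ∀ s c : ℝ, 1 ≤ s → 0 < c → m (Real.sqrt s * c) ≤ s * m c)
    (c₁ : ℝ) (hc₁ : 0 < c₁)
    (hstrict : ∀ s : ℝ, 1 < s → m (Real.sqrt s * c₁) < s * m c₁) :
    ∀ c₂ : ℝ, 0 < c₂ → m (Real.sqrt (c₁ ^ 2 + c₂ ^ 2)) < m c₁ + m c₂ := by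
  intro c₂ hc₂
  have key : ∀ a b : ℝ, 0 < a → 0 ≤ b → Real.sqrt (b / a ^ 2) * a = Real.sqrt b := by
    intro a b ha hb
    rw [Real.sqrt_div hb, Real.sqrt_sq ha.le, div_mul_cancel₀ _ ha.ne']
  rcases le_or_gt c₂ c₁ with h | h
  · have hs : 1 < (c₁ ^ 2 + c₂ ^ 2) / c₁ ^ 2 := by
      rw [lt_div_iff₀ (by positivity)]; nlinarith
    have h1 := hstrict _ hs
    rw [key c₁ _ hc₁ (by positivity)] at h1
    have h2 := hscale (c₁ ^ 2 / c₂ ^ 2) c₂ (by rw [le_div_iff₀ (by positivity)]; nlinarith) hc₂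
    rw [Real.sqrt_div (by positivity), Real.sqrt_sq hc₁.le, Real.sqrt_sq hc₂.le,
      div_mul_cancel₀ _ hc₂.ne'] at h2
    have e1 : (c₁ ^ 2 + c₂ ^ 2) / c₁ ^ 2 * m c₁ = m c₁ + c₂ ^ 2 / c₁ ^ 2 * m c₁ := by
      field_simp
    have e2 : c₂ ^ 2 / c₁ ^ 2 * m c₁ ≤ m c₂ := by
      rw [div_mul_eq_mul_div, div_le_iff₀ (by positivity)]
      rw [div_mul_eq_mul_div, le_div_iff₀ (by positivity)] at h2
      nlinarith
    linarith [e1 ▸ h1]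
  · have h1 := hscale ((c₁ ^ 2 + c₂ ^ 2) / c₂ ^ 2) c₂
      (by rw [le_div_iff₀ (by positivity)]; nlinarith) hc₂
    rw [key c₂ _ hc₂ (by positivity)] at h1
    have h2 := hstrict (c₂ ^ 2 / c₁ ^ 2)
      (by rw [lt_div_iff₀ (by positivity)]; nlinarith)
    rw [Real.sqrt_div (by positivity), Real.sqrt_sq hc₂.le, Real.sqrt_sq hc₁.le,
      div_mul_cancel₀ _ hc₁.ne'] at h2
    have e1 : (c₁ ^ 2 + c₂ ^ 2) / c₂ ^ 2 * m c₂ = m c₂ + c₁ ^ 2 / c₂ ^ 2 * m c₂ := by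
      field_simp; ring
    have e2 : c₁ ^ 2 / c₂ ^ 2 * m c₂ < m c₁ := by
      rw [div_mul_eq_mul_div, div_lt_iff₀ (by positivity)]
      rw [div_mul_eq_mul_div, lt_div_iff₀ (by positivity)] at h2
      nlinarith
    linarith [e1 ▸ h1]
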